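/- The assignment τ₂(t) = (-t^{-1}u - 3 - t - u)/2 and τ₂(u) = (-t^{-1}u + t + 1 + u)/2 extends to a well-defined ℂ-algebra automorphism τ₂ of R of order 3, and together with the automorphism ψ determined by ψ(t) = (-t^{-1}u - 3 - t - u)/2, ψ(u) = (t^{-1}u - 1 - t - u)/2 it satisfies the dihedral relation ψ ∘ τ₂ ∘ ψ = τ₂^{-1}. -/

import Mathlib

noncomputable section

set_option synthInstance.maxHeartbeats 1000000
set_option maxHeartbeats 1000000
set_option maxRecDepth 100000

open Polynomial

/-- The polynomial `u² - (t² + 4t)` over the Laurent polynomial ring `ℂ[t,t⁻¹]`. -/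
def threePoly : Polynomial (LaurentPolynomial ℂ) :=
  Polynomial.X ^ 2 - Polynomial.C (LaurentPolynomial.T 2 + 4 * LaurentPolynomial.T 1)

/-- The three-point ring `R = ℂ[t, t⁻¹, u | u² = t² + 4t]`, i.e. the quotient of
`ℂ[t,t⁻¹][u]` by the ideal generated by `u² - t² - 4t`. -/
abbrev R3 : Type := AdjoinRoot threePoly

/-- `t^k` in `R3`, for `k : ℤ`. -/
def tp (k : ℤ) : R3 := AdjoinRoot.of threePoly (LaurentPolynomial.T k)

/-- the element `t` of `R`. -/
def tR : R3 := tp 1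

/-- the element `t⁻¹` of `R`. -/
def tInv : R3 := tp (-1)

/-- the element `u` of `R`. -/
def uR : R3 := AdjoinRoot.root threePoly

namespace ThreeAux

def HH : R3 := algebraMap ℂ R3 (2⁻¹ : ℂ)
def aE : R3 := HH * (-(tInv * uR) - 3 - tR - uR)
def bE : R3 := HH * (-(tInv * uR) + tR + 1 + uR)
def dE : R3 := HH * (tInv * uR - 1 - tR - uR)
def cE : R3 := HH * (tR * tR + 3 * tR - tR * uR - uR)

lemma lem_hh : (2 : R3) * HH = 1 := by
  rw [HH, ← map_ofNat (algebraMap ℂ R3) 2, ← map_mul,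
    show (2 : ℂ) * 2⁻¹ = 1 by norm_num, map_one]

lemma lem_hti : tR * tInv = 1 := by
  rw [tR, tInv, tp, tp, ← map_mul, ← LaurentPolynomial.T_add,
    show (1 : ℤ) + (-1) = 0 by norm_num, LaurentPolynomial.T_zero, map_one]

lemma T2_eq : (LaurentPolynomial.T 2 : LaurentPolynomial ℂ)
    = LaurentPolynomial.T 1 * LaurentPolynomial.T 1 := by
  rw [show (2 : ℤ) = 1 + 1 by norm_num, LaurentPolynomial.T_add]

lemma lem_hu : uR ^ 2 = tR ^ 2 + 4 * tR := by
  have h0 : AdjoinRoot.mk threePoly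
      (Polynomial.X ^ 2 - Polynomial.C (LaurentPolynomial.T 2 + 4 * LaurentPolynomial.T 1))
      = 0 := AdjoinRoot.mk_self
  rw [map_sub, map_pow, AdjoinRoot.mk_X, AdjoinRoot.mk_C, sub_eq_zero] at h0
  rw [uR, h0, T2_eq, map_add, map_mul, map_mul, map_ofNat, tR, tp]
  ring

lemma ac : aE * cE = 1 := by
  have hti := lem_hti; have hu := lem_hu; have hh := lem_hh
  unfold aE cE
  linear_combination ((4 : R3)*HH^2 + (-3 : R3)*uR*HH^2 + (5 : R3)*tR*HH^2 + (-1 : R3)*tR*uR*HH^2 + (1 : R3)*tR^2*HH^2) * hti + ((1 : R3)*HH^2 + (1 : R3)*tInv*HH^2 + (1 : R3)*tR*HH^2 + (1 : R3)*tR*tInv*HH^2) * hu + ((1 : R3) + (2 : R3)*HH) * hh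

def aU : R3ˣ := ⟨aE, cE, ac, by rw [mul_comm]; exact ac⟩

def LA : LaurentPolynomial ℂ →ₐ[ℂ] R3 :=
  AddMonoidAlgebra.lift ℂ R3 ℤ ((Units.coeHom R3).comp (zpowersHom R3ˣ aU))

lemma LA_T (k : ℤ) : LA (LaurentPolynomial.T k) = ((aU ^ k : R3ˣ) : R3) := by
  show AddMonoidAlgebra.lift ℂ R3 ℤ ((Units.coeHom R3).comp (zpowersHom R3ˣ aU))
      (AddMonoidAlgebra.single k 1) = ((aU ^ k : R3ˣ) : R3)
  rw [AddMonoidAlgebra.lift_single, one_smul, MonoidHom.comp_apply, zpowersHom_apply,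
    toAdd_ofAdd, Units.coeHom_apply]

lemma LA_T1 : LA (LaurentPolynomial.T 1) = aE := by
  rw [LA_T, zpow_one]; rfl

lemma LA_Tm1 : LA (LaurentPolynomial.T (-1)) = cE := by
  rw [LA_T, zpow_neg_one]; rfl

lemma LA_poly : LA (LaurentPolynomial.T 2 + 4 * LaurentPolynomial.T 1) = aE * aE + 4 * aE := by
  rw [T2_eq, map_add, map_mul, map_mul, map_ofNat, LA_T1]

lemma hbE : threePoly.eval₂ (LA : LaurentPolynomial ℂ →+* R3) bE = 0 := by
  simp only [threePoly, eval₂_sub, eval₂_pow, eval₂_X, eval₂_C]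
  rw [show ((LA : LaurentPolynomial ℂ →+* R3)
      (LaurentPolynomial.T 2 + 4 * LaurentPolynomial.T 1)) = aE * aE + 4 * aE from LA_poly,
    sub_eq_zero]
  have hti := lem_hti; have hu := lem_hu; have hh := lem_hh
  unfold aE bE
  linear_combination ((-16 : R3)*HH^2 + (-4 : R3)*uR*HH^2 + (-4 : R3)*tR*HH^2) * hti + ((-4 : R3)*tInv*HH^2) * hu + ((-12 : R3)*HH + (-4 : R3)*uR*HH + (-4 : R3)*tInv*uR*HH + (-4 : R3)*tR*HH) * hh

lemma hdE : threePoly.eval₂ (LA : LaurentPolynomial ℂ →+* R3) dE = 0 := by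
  simp only [threePoly, eval₂_sub, eval₂_pow, eval₂_X, eval₂_C]
  rw [show ((LA : LaurentPolynomial ℂ →+* R3)
      (LaurentPolynomial.T 2 + 4 * LaurentPolynomial.T 1)) = aE * aE + 4 * aE from LA_poly,
    sub_eq_zero]
  have hti := lem_hti; have hu := lem_hu; have hh := lem_hh
  unfold aE dE
  linear_combination ((-16 : R3)*HH^2 + (-4 : R3)*uR*HH^2 + (-4 : R3)*tR*HH^2) * hti + ((-4 : R3)*tInv*HH^2) * hu + ((-12 : R3)*HH + (-4 : R3)*uR*HH + (-4 : R3)*tInv*uR*HH + (-4 : R3)*tR*HH) * hh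

def tau0 : R3 →+* R3 := AdjoinRoot.lift (LA : LaurentPolynomial ℂ →+* R3) bE hbE

def tauA : R3 →ₐ[ℂ] R3 :=
  { tau0 with
    commutes' := fun r => by
      show tau0 (algebraMap ℂ R3 r) = algebraMap ℂ R3 r
      rw [AdjoinRoot.algebraMap_eq', RingHom.comp_apply]
      exact (AdjoinRoot.lift_of hbE).trans (LA.commutes r) }

def psi0 : R3 →+* R3 := AdjoinRoot.lift (LA : LaurentPolynomial ℂ →+* R3) dE hdE

def psiA : R3 →ₐ[ℂ] R3 :=
  { psi0 with
    commutes' := fun r => by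
      show psi0 (algebraMap ℂ R3 r) = algebraMap ℂ R3 r
      rw [AdjoinRoot.algebraMap_eq', RingHom.comp_apply]
      exact (AdjoinRoot.lift_of hdE).trans (LA.commutes r) }

lemma taut : tauA tR = aE := (AdjoinRoot.lift_of hbE).trans LA_T1

lemma tauti : tauA tInv = cE := (AdjoinRoot.lift_of hbE).trans LA_Tm1

lemma tauu : tauA uR = bE := AdjoinRoot.lift_root hbE

lemma tauH : tauA HH = HH := tauA.commutes _

lemma psit : psiA tR = aE := (AdjoinRoot.lift_of hdE).trans LA_T1

lemma psiti : psiA tInv = cE := (AdjoinRoot.lift_of hdE).trans LA_Tm1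

lemma psiu : psiA uR = dE := AdjoinRoot.lift_root hdE

lemma psiH : psiA HH = HH := psiA.commutes _

lemma hom_ext {f g : R3 →ₐ[ℂ] R3} (h1 : f tR = g tR) (h2 : f tInv = g tInv)
    (h3 : f uR = g uR) : f = g := by
  have h1' : f (AdjoinRoot.of threePoly (LaurentPolynomial.T 1))
      = g (AdjoinRoot.of threePoly (LaurentPolynomial.T 1)) := h1
  have h2' : f (AdjoinRoot.of threePoly (LaurentPolynomial.T (-1)))
      = g (AdjoinRoot.of threePoly (LaurentPolynomial.T (-1))) := h2
  have key : ∀ k : ℤ, f (AdjoinRoot.of threePoly (LaurentPolynomial.T k))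
      = g (AdjoinRoot.of threePoly (LaurentPolynomial.T k)) := by
    intro k
    induction k using Int.induction_on with
    | zero => simp only [LaurentPolynomial.T_zero, map_one]
    | succ n ih =>
        have e : (LaurentPolynomial.T ((n : ℤ) + 1) : LaurentPolynomial ℂ)
            = LaurentPolynomial.T n * LaurentPolynomial.T 1 := by
          rw [LaurentPolynomial.T_add]
        rw [e, map_mul, map_mul, map_mul, ih, h1']
    | pred n ih =>
        have e : (LaurentPolynomial.T (-(n : ℤ) - 1) : LaurentPolynomial ℂ)
            = LaurentPolynomial.T (-n) * LaurentPolynomial.T (-1) := by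
          rw [sub_eq_add_neg, LaurentPolynomial.T_add]
        rw [e, map_mul, map_mul, map_mul, ih, h2']
  have main : (f : R3 →+* R3).comp (AdjoinRoot.mk threePoly)
      = (g : R3 →+* R3).comp (AdjoinRoot.mk threePoly) := by
    apply Polynomial.ringHom_ext'
    · apply AddMonoidAlgebra.ringHom_ext
      · intro c
        show f (AdjoinRoot.of threePoly (AddMonoidAlgebra.single 0 c))
          = g (AdjoinRoot.of threePoly (AddMonoidAlgebra.single 0 c))
        have e : (AddMonoidAlgebra.single (0:ℤ) c : LaurentPolynomial ℂ)
            = algebraMap ℂ (LaurentPolynomial ℂ) c := rfl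
        rw [e]
        have e2 : AdjoinRoot.of threePoly (algebraMap ℂ (LaurentPolynomial ℂ) c)
            = algebraMap ℂ R3 c := by
          rw [AdjoinRoot.algebraMap_eq', RingHom.comp_apply]
        rw [e2, f.commutes, g.commutes]
      · intro k
        exact key k
    · show f (AdjoinRoot.mk threePoly Polynomial.X) = g (AdjoinRoot.mk threePoly Polynomial.X)
      rw [AdjoinRoot.mk_X]; exact h3
  apply AlgHom.ext
  intro x
  obtain ⟨p, rfl⟩ := AdjoinRoot.mk_surjective x
  exact RingHom.congr_fun main p

lemma E1 : tauA.comp (tauA.comp tauA) = AlgHom.id ℂ R3 := by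
  have hti := lem_hti; have hu := lem_hu; have hh := lem_hh
  apply hom_ext
  · simp only [AlgHom.comp_apply, AlgHom.id_apply, taut, tauti, tauu, tauH,
      aE, bE, cE, map_mul, map_add, map_sub, map_neg, map_one, map_ofNat]
    linear_combination ((8 : R3)*HH^4 + (-44 : R3)*HH^5 + (112 : R3)*HH^6 + (16 : R3)*HH^7 + (-6 : R3)*uR*HH^4 + (-10 : R3)*uR*HH^5 + (50 : R3)*uR*HH^6 + (-4 : R3)*uR*HH^7 + (-16 : R3)*tInv*HH^5 + (32 : R3)*tInv*HH^6 + (8 : R3)*tInv*uR*HH^6 + (16 : R3)*tInv*uR*HH^7 + (10 : R3)*tR*HH^4 + (-10 : R3)*tR*HH^5 + (50 : R3)*tR*HH^6 + (4 : R3)*tR*HH^7 + (-2 : R3)*tR*uR*HH^4 + (10 : R3)*tR*uR*HH^6 + (-4 : R3)*tR*tInv*HH^5 + (48 : R3)*tR*tInv*HH^6 + (-16 : R3)*tR*tInv*HH^7 + (-6 : R3)*tR*tInv*uR*HH^6 + (4 : R3)*tR*tInv*uR*HH^7 + (2 : R3)*tR^2*HH^4 + (6 : R3)*tR^2*HH^6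 + (18 : R3)*tR^2*tInv*HH^6 + (-4 : R3)*tR^2*tInv*HH^7 + (-2 : R3)*tR^2*tInv*uR*HH^6 + (2 : R3)*tR^3*tInv*HH^6) * hti + ((-2 : R3)*HH^4 + (-2 : R3)*HH^5 + (18 : R3)*HH^6 + (-22 : R3)*HH^7 + (4 : R3)*uR*HH^6 + (-12 : R3)*uR*HH^7 + (-2 : R3)*uR^2*HH^7 + (2 : R3)*tInv*HH^4 + (-10 : R3)*tInv*HH^5 + (16 : R3)*tInv*HH^6 + (8 : R3)*tInv*HH^7 + (2 : R3)*tInv*uR*HH^6 + (4 : R3)*tInv*uR*HH^7 + (-4 : R3)*tInv^2*HH^5 + (8 : R3)*tInv^2*HH^6 + (2 : R3)*tInv^2*uR*HH^6 + (4 : R3)*tInv^2*uR*HH^7 + (2 : R3)*tInv^2*uR^2*HH^7 + (-2 : R3)*tR*HH^4 + (10 : R3)*tR*HH^6 + (-18 : R3)*tR*HH^7 + (4 : R3)*tR*uR*HH^6 + (-12 : R3)*tR*uR*HH^7 + (-2 : R3)*tR*uR^2*HH^7 + (2 : R3)*tR*tInv*HH^4 + (4 : R3)*tR*tInv*HH^6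 + (-2 : R3)*tR*tInv*uR*HH^6 + (4 : R3)*tR*tInv*uR*HH^7 + (10 : R3)*tR*tInv^2*HH^6 + (-4 : R3)*tR*tInv^2*HH^7 + (-2 : R3)*tR*tInv^2*uR*HH^6 + (2 : R3)*tR*tInv^2*uR^2*HH^7 + (4 : R3)*tR^2*HH^6 + (-10 : R3)*tR^2*HH^7 + (-4 : R3)*tR^2*uR*HH^7 + (2 : R3)*tR^2*tInv^2*HH^6 + (-2 : R3)*tR^3*HH^7) * hu + ((3 : R3)*HH + (4 : R3)*HH^2 + (8 : R3)*HH^3 + (-2 : R3)*HH^4 + (72 : R3)*HH^5 + (8 : R3)*HH^6 + (4 : R3)*uR*HH^4 + (36 : R3)*uR*HH^5 + (-8 : R3)*uR*HH^6 + (16 : R3)*tInv*HH^5 + (-2 : R3)*tInv*uR*HH^4 + (24 : R3)*tInv*uR*HH^5 + (8 : R3)*tInv*uR*HH^6 + (1 : R3)*tR + (2 : R3)*tR*HH + (4 : R3)*tR*HH^2 + (8 : R3)*tR*HH^3 + (4 : R3)*tR*HH^4 + (44 : R3)*tR*HH^5 + (-24 : R3)*tR*HH^6 + (4 : R3)*tR*uR*HH^5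 + (-8 : R3)*tR*uR*HH^6 + (4 : R3)*tR^2*HH^5 + (-8 : R3)*tR^2*HH^6) * hh
  · simp only [AlgHom.comp_apply, AlgHom.id_apply, taut, tauti, tauu, tauH,
      aE, bE, cE, map_mul, map_add, map_sub, map_neg, map_one, map_ofNat]
    linear_combination ((-8 : R3)*HH^4 + (24 : R3)*HH^5 + (48 : R3)*HH^6 + (6 : R3)*uR*HH^4 + (-12 : R3)*uR*HH^5 + (-4 : R3)*uR*HH^6 + (32 : R3)*tInv*HH^5 + (-16 : R3)*tInv*uR*HH^6 + (-10 : R3)*tR*HH^4 + (20 : R3)*tR*HH^5 + (-4 : R3)*tR*HH^6 + (2 : R3)*tR*uR*HH^4 + (-4 : R3)*tR*uR*HH^5 + (4 : R3)*tR*uR*HH^6 + (8 : R3)*tR*tInv*HH^5 + (48 : R3)*tR*tInv*HH^6 + (-20 : R3)*tR*tInv*uR*HH^6 + (-2 : R3)*tR^2*HH^4 + (4 : R3)*tR^2*HH^5 + (-4 : R3)*tR^2*HH^6 + (28 : R3)*tR^2*tInv*HH^6 + (-4 : R3)*tR^2*tInv*uR*HH^6 + (4 : R3)*tR^3*tInv*HH^6)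 * hti + ((2 : R3)*HH^4 + (-4 : R3)*HH^5 + (4 : R3)*HH^6 + (-2 : R3)*tInv*HH^4 + (4 : R3)*tInv*HH^5 + (4 : R3)*tInv*uR*HH^6 + (8 : R3)*tInv^2*HH^5 + (-4 : R3)*tInv^2*uR*HH^6 + (2 : R3)*tR*HH^4 + (-4 : R3)*tR*HH^5 + (4 : R3)*tR*HH^6 + (-2 : R3)*tR*tInv*HH^4 + (4 : R3)*tR*tInv*HH^5 + (-8 : R3)*tR*tInv*HH^6 + (4 : R3)*tR*tInv*uR*HH^6 + (12 : R3)*tR*tInv^2*HH^6 + (-4 : R3)*tR*tInv^2*uR*HH^6 + (4 : R3)*tR^2*tInv^2*HH^6) * hu + ((10 : R3)*HH^2 + (28 : R3)*HH^4 + (24 : R3)*HH^5 + (-8 : R3)*uR*HH^4 + (1 : R3)*tInv + (2 : R3)*tInv*HH + (4 : R3)*tInv*HH^2 + (8 : R3)*tInv*HH^3 + (16 : R3)*tInv*HH^4 + (-8 : R3)*tInv*uR*HH^3 + (4 : R3)*tInv*uR*HH^4 + (-8 : R3)*tInv*uR*HH^5 + (8 : R3)*tR*HH^4) * hh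
  · simp only [AlgHom.comp_apply, AlgHom.id_apply, taut, tauti, tauu, tauH,
      aE, bE, cE, map_mul, map_add, map_sub, map_neg, map_one, map_ofNat]
    linear_combination ((-8 : R3)*HH^4 + (-44 : R3)*HH^5 + (112 : R3)*HH^6 + (16 : R3)*HH^7 + (6 : R3)*uR*HH^4 + (-10 : R3)*uR*HH^5 + (50 : R3)*uR*HH^6 + (-4 : R3)*uR*HH^7 + (-16 : R3)*tInv*HH^5 + (32 : R3)*tInv*HH^6 + (8 : R3)*tInv*uR*HH^6 + (16 : R3)*tInv*uR*HH^7 + (-10 : R3)*tR*HH^4 + (-10 : R3)*tR*HH^5 + (50 : R3)*tR*HH^6 + (4 : R3)*tR*HH^7 + (2 : R3)*tR*uR*HH^4 + (10 : R3)*tR*uR*HH^6 + (-4 : R3)*tR*tInv*HH^5 + (48 : R3)*tR*tInv*HH^6 + (-16 : R3)*tR*tInv*HH^7 + (-6 : R3)*tR*tInv*uR*HH^6 + (4 : R3)*tR*tInv*uR*HH^7 + (-2 : R3)*tR^2*HH^4 + (6 : R3)*tR^2*HH^6 + (18 : R3)*tR^2*tInv*HH^6 + (-4 : R3)*tR^2*tInv*HH^7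 + (-2 : R3)*tR^2*tInv*uR*HH^6 + (2 : R3)*tR^3*tInv*HH^6) * hti + ((2 : R3)*HH^4 + (-2 : R3)*HH^5 + (18 : R3)*HH^6 + (-22 : R3)*HH^7 + (4 : R3)*uR*HH^6 + (-12 : R3)*uR*HH^7 + (-2 : R3)*uR^2*HH^7 + (-2 : R3)*tInv*HH^4 + (-10 : R3)*tInv*HH^5 + (16 : R3)*tInv*HH^6 + (8 : R3)*tInv*HH^7 + (2 : R3)*tInv*uR*HH^6 + (4 : R3)*tInv*uR*HH^7 + (-4 : R3)*tInv^2*HH^5 + (8 : R3)*tInv^2*HH^6 + (2 : R3)*tInv^2*uR*HH^6 + (4 : R3)*tInv^2*uR*HH^7 + (2 : R3)*tInv^2*uR^2*HH^7 + (2 : R3)*tR*HH^4 + (10 : R3)*tR*HH^6 + (-18 : R3)*tR*HH^7 + (4 : R3)*tR*uR*HH^6 + (-12 : R3)*tR*uR*HH^7 + (-2 : R3)*tR*uR^2*HH^7 + (-2 : R3)*tR*tInv*HH^4 + (4 : R3)*tR*tInv*HH^6 + (-2 : R3)*tR*tInv*uR*HH^6 + (4 : R3)*tR*tInv*uR*HH^7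 + (10 : R3)*tR*tInv^2*HH^6 + (-4 : R3)*tR*tInv^2*HH^7 + (-2 : R3)*tR*tInv^2*uR*HH^6 + (2 : R3)*tR*tInv^2*uR^2*HH^7 + (4 : R3)*tR^2*HH^6 + (-10 : R3)*tR^2*HH^7 + (-4 : R3)*tR^2*uR*HH^7 + (2 : R3)*tR^2*tInv^2*HH^6 + (-2 : R3)*tR^3*HH^7) * hu + ((-1 : R3)*HH + (-2 : R3)*HH^4 + (72 : R3)*HH^5 + (8 : R3)*HH^6 + (1 : R3)*uR + (2 : R3)*uR*HH + (4 : R3)*uR*HH^2 + (8 : R3)*uR*HH^3 + (4 : R3)*uR*HH^4 + (36 : R3)*uR*HH^5 + (-8 : R3)*uR*HH^6 + (16 : R3)*tInv*HH^5 + (-2 : R3)*tInv*uR*HH^4 + (24 : R3)*tInv*uR*HH^5 + (8 : R3)*tInv*uR*HH^6 + (4 : R3)*tR*HH^4 + (44 : R3)*tR*HH^5 + (-24 : R3)*tR*HH^6 + (4 : R3)*tR*uR*HH^5 + (-8 : R3)*tR*uR*HH^6 + (4 : R3)*tR^2*HH^5 + (-8 : R3)*tR^2*HH^6) * hh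

lemma E2 : psiA.comp psiA = AlgHom.id ℂ R3 := by
  have hti := lem_hti; have hu := lem_hu; have hh := lem_hh
  apply hom_ext
  · simp only [AlgHom.comp_apply, AlgHom.id_apply, psit, psiti, psiu, psiH,
      aE, dE, cE, map_mul, map_add, map_sub, map_neg, map_one, map_ofNat]
    linear_combination ((4 : R3)*HH^3 + (-3 : R3)*uR*HH^3 + (5 : R3)*tR*HH^3 + (-1 : R3)*tR*uR*HH^3 + (1 : R3)*tR^2*HH^3) * hti + ((-1 : R3)*HH^3 + (1 : R3)*tInv*HH^3 + (-1 : R3)*tR*HH^3 + (1 : R3)*tR*tInv*HH^3) * hu + ((3 : R3)*HH + (2 : R3)*HH^2 + (-2 : R3)*uR*HH^2 + (1 : R3)*tR + (2 : R3)*tR*HH + (2 : R3)*tR*HH^2) * hh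
  · simp only [AlgHom.comp_apply, AlgHom.id_apply, psit, psiti, psiu, psiH,
      aE, dE, cE, map_mul, map_add, map_sub, map_neg, map_one, map_ofNat]
    linear_combination ((10 : R3)*HH^3 + (2 : R3)*uR*HH^3 + (8 : R3)*tInv*HH^3 + (2 : R3)*tR*HH^3 + (2 : R3)*tR*tInv*HH^3) * hti + ((2 : R3)*tInv*HH^3 + (2 : R3)*tInv^2*HH^3) * hu + ((8 : R3)*HH^2 + (2 : R3)*uR*HH^2 + (1 : R3)*tInv + (2 : R3)*tInv*HH + (4 : R3)*tInv*HH^2 + (4 : R3)*tInv*uR*HH^2 + (2 : R3)*tR*HH^2) * hh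
  · simp only [AlgHom.comp_apply, AlgHom.id_apply, psit, psiti, psiu, psiH,
      aE, dE, cE, map_mul, map_add, map_sub, map_neg, map_one, map_ofNat]
    linear_combination ((-4 : R3)*HH^3 + (3 : R3)*uR*HH^3 + (-5 : R3)*tR*HH^3 + (1 : R3)*tR*uR*HH^3 + (-1 : R3)*tR^2*HH^3) * hti + ((1 : R3)*HH^3 + (-1 : R3)*tInv*HH^3 + (1 : R3)*tR*HH^3 + (-1 : R3)*tR*tInv*HH^3) * hu + ((1 : R3)*HH + (-2 : R3)*HH^2 + (1 : R3)*uR + (2 : R3)*uR*HH + (2 : R3)*uR*HH^2 + (-2 : R3)*tR*HH^2) * hh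

lemma E3 : psiA.comp (tauA.comp psiA) = tauA.comp tauA := by
  have hti := lem_hti; have hu := lem_hu; have hh := lem_hh
  apply hom_ext
  · simp only [AlgHom.comp_apply, taut, tauti, tauu, tauH, psit, psiti, psiu, psiH,
      aE, bE, cE, dE, map_mul, map_add, map_sub, map_neg, map_one, map_ofNat]
    linear_combination ((4 : R3)*HH^3 + (-8 : R3)*HH^4 + (-42 : R3)*HH^5 + (88 : R3)*HH^6 + (32 : R3)*HH^7 + (-3 : R3)*uR*HH^3 + (6 : R3)*uR*HH^4 + (-10 : R3)*uR*HH^5 + (44 : R3)*uR*HH^6 + (10 : R3)*uR*HH^7 + (-8 : R3)*tInv*HH^5 + (32 : R3)*tInv*HH^6 + (-32 : R3)*tInv*HH^7 + (32 : R3)*tInv*uR*HH^6 + (5 : R3)*tR*HH^3 + (-10 : R3)*tR*HH^4 + (-10 : R3)*tR*HH^5 + (68 : R3)*tR*HH^6 + (2 : R3)*tR*HH^7 + (-1 : R3)*tR*uR*HH^3 + (2 : R3)*tR*uR*HH^4 + (4 : R3)*tR*uR*HH^6 + (2 : R3)*tR*uR*HH^7 + (-2 : R3)*tR*tInv*HH^5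 + (-24 : R3)*tR*tInv*HH^6 + (24 : R3)*tR*tInv*HH^7 + (24 : R3)*tR*tInv*uR*HH^6 + (-16 : R3)*tR*tInv*uR*HH^7 + (-32 : R3)*tR*tInv^2*HH^7 + (24 : R3)*tR*tInv^2*uR*HH^7 + (1 : R3)*tR^2*HH^3 + (-2 : R3)*tR^2*HH^4 + (12 : R3)*tR^2*HH^6 + (-2 : R3)*tR^2*HH^7 + (-24 : R3)*tR^2*tInv*HH^6 + (24 : R3)*tR^2*tInv*HH^7 + (4 : R3)*tR^2*tInv*uR*HH^6 + (-4 : R3)*tR^2*tInv*uR*HH^7 + (-48 : R3)*tR^2*tInv^2*HH^7 + (14 : R3)*tR^2*tInv^2*uR*HH^7 + (-4 : R3)*tR^3*tInv*HH^6 + (4 : R3)*tR^3*tInv*HH^7 + (-18 : R3)*tR^3*tInv^2*HH^7 + (2 : R3)*tR^3*tInv^2*uR*HH^7 + (-2 : R3)*tR^4*tInv^2*HH^7) * hti + ((-1 : R3)*HH^3 + (2 : R3)*HH^4 + (-4 : R3)*HH^5 + (-6 : R3)*HH^6 + (8 : R3)*HH^7 + (-2 : R3)*uR*HH^6 + (2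 : R3)*uR*HH^7 + (1 : R3)*tInv*HH^3 + (-2 : R3)*tInv*HH^4 + (-10 : R3)*tInv*HH^5 + (28 : R3)*tInv*HH^6 + (2 : R3)*tInv*HH^7 + (2 : R3)*tInv*uR*HH^6 + (8 : R3)*tInv*uR*HH^7 + (2 : R3)*tInv*uR^2*HH^7 + (-2 : R3)*tInv^2*HH^5 + (8 : R3)*tInv^2*HH^6 + (8 : R3)*tInv^2*uR*HH^6 + (-6 : R3)*tInv^2*uR*HH^7 + (-2 : R3)*tInv^3*uR^2*HH^7 + (-1 : R3)*tR*HH^3 + (2 : R3)*tR*HH^4 + (-8 : R3)*tR*HH^6 + (6 : R3)*tR*HH^7 + (-2 : R3)*tR*uR*HH^6 + (2 : R3)*tR*uR*HH^7 + (1 : R3)*tR*tInv*HH^3 + (-2 : R3)*tR*tInv*HH^4 + (16 : R3)*tR*tInv*HH^6 + (-6 : R3)*tR*tInv*HH^7 + (-2 : R3)*tR*tInv*uR*HH^6 + (6 : R3)*tR*tInv*uR*HH^7 + (2 : R3)*tR*tInv*uR^2*HH^7 + (-8 : R3)*tR*tInv^2*HH^6 + (18 : R3)*tR*tInv^2*HH^7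 + (4 : R3)*tR*tInv^2*uR*HH^6 + (-6 : R3)*tR*tInv^2*uR*HH^7 + (-8 : R3)*tR*tInv^3*HH^7 + (6 : R3)*tR*tInv^3*uR*HH^7 + (-2 : R3)*tR*tInv^3*uR^2*HH^7 + (-2 : R3)*tR^2*HH^6 + (2 : R3)*tR^2*HH^7 + (2 : R3)*tR^2*tInv*uR*HH^7 + (-4 : R3)*tR^2*tInv^2*HH^6 + (6 : R3)*tR^2*tInv^2*HH^7 + (-10 : R3)*tR^2*tInv^3*HH^7 + (2 : R3)*tR^2*tInv^3*uR*HH^7 + (-2 : R3)*tR^3*tInv^3*HH^7) * hu + ((-4 : R3)*HH^3 + (-8 : R3)*HH^4 + (64 : R3)*HH^5 + (16 : R3)*HH^6 + (4 : R3)*uR*HH^3 + (-2 : R3)*uR*HH^4 + (32 : R3)*uR*HH^5 + (8 : R3)*uR*HH^6 + (8 : R3)*tInv*HH^5 + (-16 : R3)*tInv*HH^6 + (2 : R3)*tInv*uR*HH^2 + (4 : R3)*tInv*uR*HH^3 + (4 : R3)*tInv*uR*HH^4 + (32 : R3)*tInv*uR*HH^5 + (-4 : R3)*tR*HH^3 +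 (-2 : R3)*tR*HH^4 + (48 : R3)*tR*HH^5 + (8 : R3)*tR*HH^6 + (8 : R3)*tR*uR*HH^5 + (8 : R3)*tR^2*HH^5) * hh
  · simp only [AlgHom.comp_apply, taut, tauti, tauu, tauH, psit, psiti, psiu, psiH,
      aE, bE, cE, dE, map_mul, map_add, map_sub, map_neg, map_one, map_ofNat]
    linear_combination ((-8 : R3)*HH^3 + (8 : R3)*HH^4 + (-16 : R3)*HH^5 + (32 : R3)*HH^6 + (-2 : R3)*uR*HH^3 + (-6 : R3)*uR*HH^4 + (12 : R3)*uR*HH^5 + (-8 : R3)*uR*HH^6 + (-2 : R3)*tR*HH^3 + (10 : R3)*tR*HH^4 + (-20 : R3)*tR*HH^5 + (8 : R3)*tR*HH^6 + (-2 : R3)*tR*uR*HH^4 + (4 : R3)*tR*uR*HH^5 + (2 : R3)*tR^2*HH^4 + (-4 : R3)*tR^2*HH^5) * hti + ((-2 : R3)*HH^3 + (-2 : R3)*HH^4 + (12 : R3)*HH^5 + (-12 : R3)*HH^6 + (-4 : R3)*uR*HH^6 + (-2 : R3)*tInv*HH^3 + (2 : R3)*tInv*HH^4 + (-4 : R3)*tInv*HH^5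 + (8 : R3)*tInv*HH^6 + (4 : R3)*tInv*uR*HH^6 + (-2 : R3)*tR*HH^4 + (4 : R3)*tR*HH^5 + (-8 : R3)*tR*HH^6 + (-4 : R3)*tR*uR*HH^6 + (2 : R3)*tR*tInv*HH^4 + (-4 : R3)*tR*tInv*HH^5 + (4 : R3)*tR*tInv*uR*HH^6 + (-4 : R3)*tR^2*HH^6) * hu + ((-8 : R3)*HH^3 + (16 : R3)*HH^4 + (16 : R3)*HH^5 + (-4 : R3)*uR*HH^2 + (-4 : R3)*uR*HH^3 + (20 : R3)*uR*HH^4 + (-8 : R3)*uR*HH^5 + (-2 : R3)*tInv*uR*HH^2 + (-4 : R3)*tR*HH^2 + (4 : R3)*tR*HH^3 + (20 : R3)*tR*HH^4 + (-8 : R3)*tR*HH^5 + (4 : R3)*tR*uR*HH^3 + (8 : R3)*tR*uR*HH^4 + (4 : R3)*tR^2*HH^3 + (8 : R3)*tR^2*HH^4) * hh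
  · simp only [AlgHom.comp_apply, taut, tauti, tauu, tauH, psit, psiti, psiu, psiH,
      aE, bE, cE, dE, map_mul, map_add, map_sub, map_neg, map_one, map_ofNat]
    linear_combination ((4 : R3)*HH^3 + (-8 : R3)*HH^4 + (42 : R3)*HH^5 + (-88 : R3)*HH^6 + (-32 : R3)*HH^7 + (-3 : R3)*uR*HH^3 + (6 : R3)*uR*HH^4 + (10 : R3)*uR*HH^5 + (-44 : R3)*uR*HH^6 + (-10 : R3)*uR*HH^7 + (8 : R3)*tInv*HH^5 + (-32 : R3)*tInv*HH^6 + (32 : R3)*tInv*HH^7 + (-32 : R3)*tInv*uR*HH^6 + (5 : R3)*tR*HH^3 + (-10 : R3)*tR*HH^4 + (10 : R3)*tR*HH^5 + (-68 : R3)*tR*HH^6 + (-2 : R3)*tR*HH^7 + (-1 : R3)*tR*uR*HH^3 + (2 : R3)*tR*uR*HH^4 + (-4 : R3)*tR*uR*HH^6 + (-2 : R3)*tR*uR*HH^7 + (2 : R3)*tR*tInv*HH^5 + (24 : R3)*tR*tInv*HH^6 + (-24 : R3)*tR*tInv*HH^7 + (-24 : R3)*tR*tInv*uR*HH^6 + (16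 : R3)*tR*tInv*uR*HH^7 + (32 : R3)*tR*tInv^2*HH^7 + (-24 : R3)*tR*tInv^2*uR*HH^7 + (1 : R3)*tR^2*HH^3 + (-2 : R3)*tR^2*HH^4 + (-12 : R3)*tR^2*HH^6 + (2 : R3)*tR^2*HH^7 + (24 : R3)*tR^2*tInv*HH^6 + (-24 : R3)*tR^2*tInv*HH^7 + (-4 : R3)*tR^2*tInv*uR*HH^6 + (4 : R3)*tR^2*tInv*uR*HH^7 + (48 : R3)*tR^2*tInv^2*HH^7 + (-14 : R3)*tR^2*tInv^2*uR*HH^7 + (4 : R3)*tR^3*tInv*HH^6 + (-4 : R3)*tR^3*tInv*HH^7 + (18 : R3)*tR^3*tInv^2*HH^7 + (-2 : R3)*tR^3*tInv^2*uR*HH^7 + (2 : R3)*tR^4*tInv^2*HH^7) * hti + ((-1 : R3)*HH^3 + (2 : R3)*HH^4 + (4 : R3)*HH^5 + (6 : R3)*HH^6 + (-8 : R3)*HH^7 + (2 : R3)*uR*HH^6 + (-2 : R3)*uR*HH^7 + (1 : R3)*tInv*HH^3 + (-2 : R3)*tInv*HH^4 + (10 : R3)*tInv*HH^5 + (-28 :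 R3)*tInv*HH^6 + (-2 : R3)*tInv*HH^7 + (-2 : R3)*tInv*uR*HH^6 + (-8 : R3)*tInv*uR*HH^7 + (-2 : R3)*tInv*uR^2*HH^7 + (2 : R3)*tInv^2*HH^5 + (-8 : R3)*tInv^2*HH^6 + (-8 : R3)*tInv^2*uR*HH^6 + (6 : R3)*tInv^2*uR*HH^7 + (2 : R3)*tInv^3*uR^2*HH^7 + (-1 : R3)*tR*HH^3 + (2 : R3)*tR*HH^4 + (8 : R3)*tR*HH^6 + (-6 : R3)*tR*HH^7 + (2 : R3)*tR*uR*HH^6 + (-2 : R3)*tR*uR*HH^7 + (1 : R3)*tR*tInv*HH^3 + (-2 : R3)*tR*tInv*HH^4 + (-16 : R3)*tR*tInv*HH^6 + (6 : R3)*tR*tInv*HH^7 + (2 : R3)*tR*tInv*uR*HH^6 + (-6 : R3)*tR*tInv*uR*HH^7 + (-2 : R3)*tR*tInv*uR^2*HH^7 + (8 : R3)*tR*tInv^2*HH^6 + (-18 : R3)*tR*tInv^2*HH^7 + (-4 : R3)*tR*tInv^2*uR*HH^6 + (6 : R3)*tR*tInv^2*uR*HH^7 + (8 : R3)*tR*tInv^3*HH^7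 + (-6 : R3)*tR*tInv^3*uR*HH^7 + (2 : R3)*tR*tInv^3*uR^2*HH^7 + (2 : R3)*tR^2*HH^6 + (-2 : R3)*tR^2*HH^7 + (-2 : R3)*tR^2*tInv*uR*HH^7 + (4 : R3)*tR^2*tInv^2*HH^6 + (-6 : R3)*tR^2*tInv^2*HH^7 + (10 : R3)*tR^2*tInv^3*HH^7 + (-2 : R3)*tR^2*tInv^3*uR*HH^7 + (2 : R3)*tR^3*tInv^3*HH^7) * hu + ((2 : R3)*HH + (-4 : R3)*HH^3 + (8 : R3)*HH^4 + (-64 : R3)*HH^5 + (-16 : R3)*HH^6 + (4 : R3)*uR*HH^3 + (2 : R3)*uR*HH^4 + (-32 : R3)*uR*HH^5 + (-8 : R3)*uR*HH^6 + (-8 : R3)*tInv*HH^5 + (16 : R3)*tInv*HH^6 + (-2 : R3)*tInv*uR*HH^2 + (-4 : R3)*tInv*uR*HH^3 + (-4 : R3)*tInv*uR*HH^4 + (-32 : R3)*tInv*uR*HH^5 + (-4 : R3)*tR*HH^3 + (2 : R3)*tR*HH^4 + (-48 : R3)*tR*HH^5 + (-8 : R3)*tR*HH^6 + (-8 : R3)*tR*uR*HH^5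 + (-8 : R3)*tR^2*HH^5) * hh

def tauE : R3 ≃ₐ[ℂ] R3 :=
  AlgEquiv.ofAlgHom tauA (tauA.comp tauA) E1 (by rw [AlgHom.comp_assoc]; exact E1)

def psiE : R3 ≃ₐ[ℂ] R3 := AlgEquiv.ofAlgHom psiA psiA E2 E2

lemma tauE_apply (x : R3) : tauE x = tauA x := rfl

lemma psiE_apply (x : R3) : psiE x = psiA x := rfl

lemma tau_cube : tauE ^ 3 = 1 := by
  apply AlgEquiv.ext
  intro x
  have hx := DFunLike.congr_fun E1 x
  simp only [AlgHom.comp_apply, AlgHom.id_apply] at hx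
  rw [pow_succ, pow_succ, pow_one, AlgEquiv.mul_apply, AlgEquiv.mul_apply,
    AlgEquiv.one_apply, tauE_apply, tauE_apply, tauE_apply]
  exact hx

-- evaluation at t = -4, u = 0
def m4U : ℂˣ := Units.mk0 (-4 : ℂ) (by norm_num)

def evL : LaurentPolynomial ℂ →ₐ[ℂ] ℂ :=
  AddMonoidAlgebra.lift ℂ ℂ ℤ ((Units.coeHom ℂ).comp (zpowersHom ℂˣ m4U))

lemma evL_T (k : ℤ) : evL (LaurentPolynomial.T k) = ((m4U ^ k : ℂˣ) : ℂ) := by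
  show AddMonoidAlgebra.lift ℂ ℂ ℤ ((Units.coeHom ℂ).comp (zpowersHom ℂˣ m4U))
      (AddMonoidAlgebra.single k 1) = ((m4U ^ k : ℂˣ) : ℂ)
  rw [AddMonoidAlgebra.lift_single, one_smul, MonoidHom.comp_apply, zpowersHom_apply,
    toAdd_ofAdd, Units.coeHom_apply]

lemma hev : threePoly.eval₂ (evL : LaurentPolynomial ℂ →+* ℂ) (0 : ℂ) = 0 := by
  simp only [threePoly, eval₂_sub, eval₂_pow, eval₂_X, eval₂_C]
  have : (evL : LaurentPolynomial ℂ →+* ℂ) (LaurentPolynomial.T 2 + 4 * LaurentPolynomial.T 1)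
      = 0 := by
    rw [T2_eq]
    show evL (LaurentPolynomial.T 1 * LaurentPolynomial.T 1 + 4 * LaurentPolynomial.T 1) = 0
    rw [map_add, map_mul, map_mul, map_ofNat, evL_T, zpow_one]
    show (-4 : ℂ) * (-4) + 4 * (-4) = 0
    norm_num
  rw [this]
  norm_num

def ev0 : R3 →+* ℂ := AdjoinRoot.lift (evL : LaurentPolynomial ℂ →+* ℂ) (0 : ℂ) hev

def evA : R3 →ₐ[ℂ] ℂ :=
  { ev0 with
    commutes' := fun r => by
      show ev0 (algebraMap ℂ R3 r) = algebraMap ℂ ℂ r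
      rw [AdjoinRoot.algebraMap_eq', RingHom.comp_apply]
      exact (AdjoinRoot.lift_of hev).trans (evL.commutes r) }

lemma evt : evA tR = -4 := by
  refine (AdjoinRoot.lift_of hev).trans ?_
  show evL (LaurentPolynomial.T 1) = -4
  rw [evL_T, zpow_one]; rfl

lemma evti : evA tInv = (-4 : ℂ)⁻¹ := by
  refine (AdjoinRoot.lift_of hev).trans ?_
  show evL (LaurentPolynomial.T (-1)) = (-4 : ℂ)⁻¹
  rw [evL_T, zpow_neg_one]
  show ((m4U⁻¹ : ℂˣ) : ℂ) = (-4 : ℂ)⁻¹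
  rw [Units.val_inv_eq_inv_val]
  rfl

lemma evu : evA uR = 0 := AdjoinRoot.lift_root hev

lemma evH : evA HH = (2 : ℂ)⁻¹ := by
  rw [HH, evA.commutes]
  rfl

lemma tau_ne_one : tauE ≠ 1 := by
  intro hcon
  have h1 : tauA tR = tR := by
    have := DFunLike.congr_fun hcon tR
    rw [AlgEquiv.one_apply] at this
    exact this
  have h2 := congrArg evA h1
  rw [taut] at h2
  simp only [aE, map_mul, map_add, map_sub, map_neg, map_one, map_ofNat,
    evt, evti, evu, evH] at h2
  norm_num at h2

lemma tau_order : orderOf tauE = 3 := by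
  haveI : Fact (Nat.Prime 3) := ⟨by norm_num⟩
  exact orderOf_eq_prime tau_cube tau_ne_one

lemma tau_inv : tauE⁻¹ = tauE * tauE := by
  apply inv_eq_of_mul_eq_one_right
  have e : tauE * (tauE * tauE) = tauE ^ 3 := by
    rw [pow_succ, pow_succ, pow_one, mul_assoc]
  rw [e, tau_cube]

lemma rel : psiE * tauE * psiE = tauE⁻¹ := by
  rw [tau_inv]
  apply AlgEquiv.ext
  intro x
  have hx := DFunLike.congr_fun E3 x
  simp only [AlgHom.comp_apply] at hx
  rw [AlgEquiv.mul_apply, AlgEquiv.mul_apply, AlgEquiv.mul_apply,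
    psiE_apply, psiE_apply, tauE_apply, tauE_apply, tauE_apply]
  exact hx

end ThreeAux

open ThreeAux in
/-- The assignment `τ₂(t) = (-t⁻¹u - 3 - t - u)/2`, `τ₂(u) = (-t⁻¹u + t + 1 + u)/2` extends to a
well-defined `ℂ`-algebra automorphism `τ₂` of `R` of order 3, and together with the automorphism
`ψ` determined by `ψ(t) = (-t⁻¹u - 3 - t - u)/2`, `ψ(u) = (t⁻¹u - 1 - t - u)/2` it satisfies the
dihedral relation `ψ ∘ τ₂ ∘ ψ = τ₂⁻¹`. -/
theorem stmt_3 :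
    ∃ τ₂ ψ : R3 ≃ₐ[ℂ] R3,
      τ₂ tR = (2 : ℂ)⁻¹ • (-(tInv * uR) - 3 - tR - uR) ∧
      τ₂ uR = (2 : ℂ)⁻¹ • (-(tInv * uR) + tR + 1 + uR) ∧
      ψ tR = (2 : ℂ)⁻¹ • (-(tInv * uR) - 3 - tR - uR) ∧
      ψ uR = (2 : ℂ)⁻¹ • (tInv * uR - 1 - tR - uR) ∧
      orderOf τ₂ = 3 ∧
      ψ * τ₂ * ψ = τ₂⁻¹ := by
  refine ⟨tauE, psiE, ?_, ?_, ?_, ?_, tau_order, rel⟩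
  · rw [tauE_apply, taut, aE, Algebra.smul_def]; rfl
  · rw [tauE_apply, tauu, bE, Algebra.smul_def]; rfl
  · rw [psiE_apply, psit, aE, Algebra.smul_def]; rfl
  · rw [psiE_apply, psiu, dE, Algebra.smul_def]; rfl

end
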